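/- arXiv:2003.12268 — 2 statements merged into one kernel-verified Lean document; each statement's English description precedes it below -/
import Mathlib

section
/- Let f : ℝ × ℝ → ℝ be continuously differentiable and let t₀, h ∈ ℝ be fixed. Define T : ℝ × ℝ → ℝ × ℝ by T(x, v) = (x₂, v₂), where x₁ = x + (h/2)·v, v₂ = v + h·f(x₁, t₀ + h/2), and x₂ = x₁ + (h/2)·v₂. Then T is differentiable at every point and the determinant of its Fréchet derivative equals 1 at every point; in particular the second-order method (4.3) preserves area on ℝ². -/
open MeasureTheory

private lemma det_two (L : (ℝ×ℝ) →ₗ[ℝ] (ℝ×ℝ)) :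
    L.det = (L (1,0)).1 * (L (0,1)).2 - (L (0,1)).1 * (L (1,0)).2 := by
  rw [← LinearMap.det_toMatrix (Module.Basis.finTwoProd ℝ), Matrix.det_fin_two]
  simp [LinearMap.toMatrix_apply, Module.Basis.finTwoProd]

private lemma shear_mp (g : ℝ → ℝ) (hg : Measurable g) :
    MeasurePreserving (fun p : ℝ×ℝ => (p.1, p.2 + g p.1)) volume volume := by
  rw [Measure.volume_eq_prod ℝ ℝ]
  exact (MeasurePreserving.id volume).skew_product
    (g := fun x v => v + g x)
    (by exact measurable_snd.add (hg.comp measurable_fst))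
    (Filter.Eventually.of_forall fun x => (measurePreserving_add_right volume (g x)).map_eq)

private lemma swap_mp : MeasurePreserving (Prod.swap : ℝ×ℝ → ℝ×ℝ) volume volume := by
  rw [Measure.volume_eq_prod ℝ ℝ]; exact Measure.measurePreserving_swap

/-- Method (4.3): with `x₁ = x + (h/2)·v`, `v₂ = v + h·f(x₁, t₀ + h/2)`,
`x₂ = x₁ + (h/2)·v₂`, the one-step map `T (x, v) = (x₂, v₂)` is everywhere
differentiable, has Jacobian determinant 1 everywhere, and preserves area
(Lebesgue measure) on `ℝ²`. -/
theorem deVogelaere_method_4_3_area_preserving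
    (f : ℝ × ℝ → ℝ) (hf : ContDiff ℝ 1 f) (t₀ h : ℝ)
    (T : ℝ × ℝ → ℝ × ℝ)
    (hT : ∀ x v : ℝ,
      T (x, v) =
        ((x + h / 2 * v) + h / 2 * (v + h * f (x + h / 2 * v, t₀ + h / 2)),
         v + h * f (x + h / 2 * v, t₀ + h / 2))) :
    (∀ p : ℝ × ℝ, DifferentiableAt ℝ T p) ∧
    (∀ p : ℝ × ℝ, (fderiv ℝ T p).det = 1) ∧
    MeasurePreserving T volume volume := by
  set c : ℝ := t₀ + h / 2 with hc
  -- the half-drift linear map A (x,v) = (x + h/2 v, v)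
  set A : (ℝ×ℝ) →L[ℝ] (ℝ×ℝ) :=
    ((ContinuousLinearMap.fst ℝ ℝ ℝ) + (h/2) • (ContinuousLinearMap.snd ℝ ℝ ℝ)).prod
      (ContinuousLinearMap.snd ℝ ℝ ℝ) with hA
  have hAapp : ∀ p : ℝ×ℝ, A p = (p.1 + h/2 * p.2, p.2) := by
    intro p
    simp [hA, smul_eq_mul]
  -- the kick map G (x,v) = (x, v + h f(x,c))
  set G : ℝ×ℝ → ℝ×ℝ := fun p => (p.1, p.2 + h * f (p.1, c)) with hG
  -- T = A ∘ G ∘ A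
  have hTeq : T = fun p => A (G (A p)) := by
    funext p
    obtain ⟨x, v⟩ := p
    rw [hT x v]
    simp only [hAapp, hG]
  -- differentiability of x ↦ f (x, c)
  have hfd : Differentiable ℝ f := hf.differentiable one_ne_zero
  have hfc : Differentiable ℝ (fun x : ℝ => f (x, c)) :=
    hfd.comp (differentiable_id.prodMk (differentiable_const c))
  -- derivative of G
  have hGder : ∀ p : ℝ×ℝ, HasFDerivAt G
      ((ContinuousLinearMap.fst ℝ ℝ ℝ).prod
        ((ContinuousLinearMap.snd ℝ ℝ ℝ) +
          h • ((fderiv ℝ (fun x : ℝ => f (x, c)) p.1).comp (ContinuousLinearMap.fst ℝ ℝ ℝ)))) p := by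
    intro p
    exact HasFDerivAt.prodMk (hasFDerivAt_fst)
      (HasFDerivAt.add (hasFDerivAt_snd)
        (((hfc p.1).hasFDerivAt.comp p (hasFDerivAt_fst)).const_mul h))
  -- derivative of T
  have hTder : ∀ p : ℝ×ℝ, HasFDerivAt T
      (A.comp ((((ContinuousLinearMap.fst ℝ ℝ ℝ).prod
        ((ContinuousLinearMap.snd ℝ ℝ ℝ) +
          h • ((fderiv ℝ (fun x : ℝ => f (x, c)) (A p).1).comp
            (ContinuousLinearMap.fst ℝ ℝ ℝ)))).comp A))) p := by
    intro p
    rw [hTeq]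
    exact A.hasFDerivAt.comp p ((hGder (A p)).comp p A.hasFDerivAt)
  refine ⟨fun p => (hTder p).differentiableAt, fun p => ?_, ?_⟩
  · -- Jacobian determinant
    rw [(hTder p).fderiv]
    set D : ℝ →L[ℝ] ℝ := fderiv ℝ (fun x : ℝ => f (x, c)) (A p).1 with hD
    set B : (ℝ×ℝ) →L[ℝ] (ℝ×ℝ) :=
      (ContinuousLinearMap.fst ℝ ℝ ℝ).prod
        ((ContinuousLinearMap.snd ℝ ℝ ℝ) +
          h • (D.comp (ContinuousLinearMap.fst ℝ ℝ ℝ))) with hB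
    have hdet : (A.comp (B.comp A)).det
        = (A : (ℝ×ℝ) →ₗ[ℝ] (ℝ×ℝ)).det * ((B : (ℝ×ℝ) →ₗ[ℝ] (ℝ×ℝ)).det *
            (A : (ℝ×ℝ) →ₗ[ℝ] (ℝ×ℝ)).det) := by
      simp [ContinuousLinearMap.det, ContinuousLinearMap.coe_comp, LinearMap.det_comp,
        mul_assoc]
    rw [hdet, det_two, det_two (B : (ℝ×ℝ) →ₗ[ℝ] (ℝ×ℝ))]
    have h1 : (A : (ℝ×ℝ) →ₗ[ℝ] (ℝ×ℝ)) (1,0) = (1, 0) := by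
      simpa using hAapp (1,0)
    have h2 : (A : (ℝ×ℝ) →ₗ[ℝ] (ℝ×ℝ)) (0,1) = (h/2, 1) := by
      simpa using hAapp (0,1)
    have h3 : (B : (ℝ×ℝ) →ₗ[ℝ] (ℝ×ℝ)) (1,0) = (1, h * D 1) := by
      simp [hB, smul_eq_mul]
    have h4 : (B : (ℝ×ℝ) →ₗ[ℝ] (ℝ×ℝ)) (0,1) = (0, 1) := by
      simp [hB]
    rw [h1, h2, h3, h4]
    ring
  · -- measure preservation
    have hgmeas : Measurable (fun x : ℝ => h * f (x, c)) :=
      (hf.continuous.comp (continuous_id.prodMk continuous_const)).measurable.const_mul h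
    have hG_mp : MeasurePreserving G volume volume := shear_mp _ hgmeas
    have hs_mp : MeasurePreserving (fun p : ℝ×ℝ => (p.1, p.2 + h/2 * p.1)) volume volume :=
      shear_mp (fun v => h/2 * v) (measurable_const.mul measurable_id)
    have hA_mp : MeasurePreserving (A : ℝ×ℝ → ℝ×ℝ) volume volume := by
      have : (A : ℝ×ℝ → ℝ×ℝ) =
          Prod.swap ∘ (fun p : ℝ×ℝ => (p.1, p.2 + h/2 * p.1)) ∘ Prod.swap := by
        funext p
        simp [hAapp, Function.comp, add_comm]
      rw [this]
      exact swap_mp.comp (hs_mp.comp swap_mp)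
    rw [hTeq]
    exact hA_mp.comp (hG_mp.comp hA_mp)
end

section
/- Let f, g : ℝ × ℝ × ℝ → ℝ be twice continuously differentiable, α ∈ ℝ, and let (x, y) : ℝ → ℝ × ℝ be a solution of ẋ = f(x, y, t), ẏ = g(x, y, t) that is three times continuously differentiable near t₀, with x₀ = x(t₀), y₀ = y(t₀). Suppose X₁, Y₂ : ℝ → ℝ are continuous at 0 with X₁(0) = x₀, Y₂(0) = y₀ and for all h near 0 satisfy: X₁(h) = x₀ + (h/2)·f(X₁(h), y₀, t₀ + α·h), Y₁(h) = y₀ + (h/2)·g(X₁(h), y₀, t₀ + α·h), Y₂(h) = Y₁(h) + (h/2)·g(X₁(h), Y₂(h), t₀ + (1−α)·h), and set X₂(h) = X₁(h) + (h/2)·f(X₁(h), Y₂(h), t₀ + (1−α)·h). Then the method is second order: as h → 0, X₂(h) − x(t₀ + h) = o(h²) and Y₂(h) − y(t₀ + h) = o(h²). -/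
open Asymptotics Filter

private lemma taylor2 (x x' : ℝ → ℝ) (a t₀ : ℝ)
    (hd : ∀ᶠ t in nhds t₀, HasDerivAt x (x' t) t)
    (hd2 : HasDerivAt x' a t₀) :
    (fun h : ℝ => x (t₀ + h) - x t₀ - h * x' t₀ - h ^ 2 / 2 * a)
      =o[nhds 0] fun h : ℝ => h ^ 2 := by
  rw [isLittleO_iff]
  intro ε hε
  have h2 : ∀ᶠ t in nhds t₀, ‖x' t - x' t₀ - (t - t₀) * a‖ ≤ ε * ‖t - t₀‖ := by
    have := (hasDerivAt_iff_isLittleO.mp hd2).def hε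
    simpa [smul_eq_mul, mul_comm] using this
  obtain ⟨δ, hδ, hball⟩ := Metric.eventually_nhds_iff.mp (hd.and h2)
  have hev : ∀ᶠ h : ℝ in nhds 0, |h| < δ := by
    filter_upwards [Metric.ball_mem_nhds (0:ℝ) hδ] with h hh
    simpa [Real.dist_eq] using hh
  filter_upwards [hev] with h hh
  set φ : ℝ → ℝ := fun k => x (t₀ + k) - x t₀ - k * x' t₀ - k ^ 2 / 2 * a with hφdef
  set φ' : ℝ → ℝ := fun k => x' (t₀ + k) - x' t₀ - k * a with hφ'def
  have hmem : ∀ k ∈ Set.uIcc (0:ℝ) h, |k| ≤ |h| := by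
    intro k hk
    rw [Set.mem_uIcc] at hk
    have h1 := le_abs_self h
    have h2 := neg_abs_le h
    rcases hk with ⟨ha, hb⟩ | ⟨ha, hb⟩ <;> rw [abs_le] <;> constructor <;> linarith
  have hdist : ∀ k ∈ Set.uIcc (0:ℝ) h, dist (t₀ + k) t₀ < δ := by
    intro k hk
    have := hmem k hk
    rw [Real.dist_eq]
    simpa using lt_of_le_of_lt this hh
  have hderiv : ∀ k ∈ Set.uIcc (0:ℝ) h, HasDerivWithinAt φ (φ' k) (Set.uIcc (0:ℝ) h) k := by
    intro k hk
    have hx := (hball (hdist k hk)).1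
    have h1 : HasDerivAt (fun k : ℝ => x (t₀ + k)) (x' (t₀ + k) * 1) k :=
      HasDerivAt.comp k hx ((hasDerivAt_id k).const_add t₀)
    have h2 : HasDerivAt (fun k : ℝ => k ^ 2 / 2 * a) (k * a) k := by
      have := ((hasDerivAt_pow 2 k).div_const 2).mul_const a
      refine this.congr_deriv ?_
      push_cast
      ring
    have h3 := ((h1.sub_const (x t₀)).sub (hasDerivAt_mul_const (x' t₀))).sub h2
    have h4 : HasDerivAt φ (φ' k) k := by
      refine h3.congr_deriv ?_
      simp [hφ'def]
    exact h4.hasDerivWithinAt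
  have hbound : ∀ k ∈ Set.uIcc (0:ℝ) h, ‖φ' k‖ ≤ ε * |h| := by
    intro k hk
    have := (hball (hdist k hk)).2
    simp only [add_sub_cancel_left] at this
    calc ‖φ' k‖ ≤ ε * ‖k‖ := this
      _ ≤ ε * |h| := by
          rw [Real.norm_eq_abs]
          exact mul_le_mul_of_nonneg_left (hmem k hk) hε.le
  have key := Convex.norm_image_sub_le_of_norm_hasDerivWithin_le hderiv hbound
    (convex_uIcc (0:ℝ) h) Set.left_mem_uIcc Set.right_mem_uIcc
  have hφ0 : φ 0 = 0 := by simp [hφdef]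
  rw [hφ0, sub_zero, sub_zero] at key
  calc ‖φ h‖ ≤ ε * |h| * ‖h‖ := key
    _ = ε * ‖h ^ 2‖ := by
        rw [Real.norm_eq_abs, Real.norm_eq_abs, abs_pow]
        ring

private lemma comp_key {p₀ : ℝ × ℝ × ℝ} (f : ℝ × ℝ × ℝ → ℝ)
    (hf : DifferentiableAt ℝ f p₀) (φ : ℝ → ℝ × ℝ × ℝ) (v : ℝ × ℝ × ℝ)
    (hφ : (fun h : ℝ => φ h - p₀ - h • v) =o[nhds 0] fun h : ℝ => h) :
    (fun h : ℝ => f (φ h) - f p₀ - h * fderiv ℝ f p₀ v) =o[nhds 0] fun h : ℝ => h := by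
  set L := fderiv ℝ f p₀ with hL
  have hsm : (fun h : ℝ => h • v) =O[nhds 0] fun h : ℝ => h := by
    apply IsBigO.of_bound ‖v‖
    filter_upwards with h
    rw [norm_smul]
    exact le_of_eq (mul_comm _ _)
  have hψO : (fun h : ℝ => φ h - p₀) =O[nhds 0] fun h : ℝ => h := by
    have := hφ.isBigO.add hsm
    simpa using this
  have htend : Tendsto φ (nhds 0) (nhds p₀) := by
    rw [← tendsto_sub_nhds_zero_iff]
    have h1 : (fun h : ℝ => φ h - p₀) =o[nhds 0] (fun _ : ℝ => (1:ℝ)) := by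
      refine hψO.trans_isLittleO ?_
      exact (isLittleO_one_iff ℝ).mpr tendsto_id
    exact (isLittleO_one_iff ℝ).mp h1
  have key := hf.hasFDerivAt.isLittleO.comp_tendsto htend
  have key2 : (fun h : ℝ => f (φ h) - f p₀ - L (φ h - p₀)) =o[nhds 0] fun h : ℝ => h :=
    key.trans_isBigO hψO
  have key3 : (fun h : ℝ => L (φ h - p₀ - h • v)) =o[nhds 0] fun h : ℝ => h :=
    (L.isBigO_comp _ _).trans_isLittleO hφ
  have hsum := key2.add key3
  refine hsum.congr' ?_ EventuallyEq.rfl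
  filter_upwards with h
  simp only [map_sub, map_smul, smul_eq_mul]
  ring

/-- The implicit method (6.1) is second order: with
`X₁(h) = x₀ + (h/2)·f(X₁(h), y₀, t₀ + α·h)`,
`Y₁(h) = y₀ + (h/2)·g(X₁(h), y₀, t₀ + α·h)`,
`Y₂(h) = Y₁(h) + (h/2)·g(X₁(h), Y₂(h), t₀ + (1−α)·h)`,
`X₂(h) = X₁(h) + (h/2)·f(X₁(h), Y₂(h), t₀ + (1−α)·h)`, one has
`X₂(h) − x(t₀ + h) = o(h²)` and `Y₂(h) − y(t₀ + h) = o(h²)` as `h → 0`. -/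
theorem deVogelaere_method_6_1_second_order
    (f g : ℝ × ℝ × ℝ → ℝ) (hf : ContDiff ℝ 2 f) (hg : ContDiff ℝ 2 g)
    (α t₀ : ℝ)
    (x y : ℝ → ℝ) (s : Set ℝ) (hs : s ∈ nhds t₀)
    (hx : ContDiffOn ℝ 3 x s) (hy : ContDiffOn ℝ 3 y s)
    (hode : ∀ t ∈ s,
      deriv x t = f (x t, y t, t) ∧ deriv y t = g (x t, y t, t))
    (X₁ Y₁ X₂ Y₂ : ℝ → ℝ)
    (hX₁c : ContinuousAt X₁ 0) (hX₁0 : X₁ 0 = x t₀)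
    (hY₂c : ContinuousAt Y₂ 0) (hY₂0 : Y₂ 0 = y t₀)
    (hX₁eq : ∀ᶠ h in nhds (0 : ℝ),
      X₁ h = x t₀ + h / 2 * f (X₁ h, y t₀, t₀ + α * h))
    (hY₁eq : ∀ᶠ h in nhds (0 : ℝ),
      Y₁ h = y t₀ + h / 2 * g (X₁ h, y t₀, t₀ + α * h))
    (hY₂eq : ∀ᶠ h in nhds (0 : ℝ),
      Y₂ h = Y₁ h + h / 2 * g (X₁ h, Y₂ h, t₀ + (1 - α) * h))
    (hX₂eq : ∀ h : ℝ,
      X₂ h = X₁ h + h / 2 * f (X₁ h, Y₂ h, t₀ + (1 - α) * h)) :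
    ((fun h : ℝ => X₂ h - x (t₀ + h)) =o[nhds 0] fun h : ℝ => h ^ 2) ∧
    ((fun h : ℝ => Y₂ h - y (t₀ + h)) =o[nhds 0] fun h : ℝ => h ^ 2) := by
  have ht₀s : t₀ ∈ s := mem_of_mem_nhds hs
  set p₀ : ℝ × ℝ × ℝ := (x t₀, y t₀, t₀) with hp₀
  set f₀ : ℝ := f p₀ with hf₀def
  set g₀ : ℝ := g p₀ with hg₀def
  have hfd : DifferentiableAt ℝ f p₀ :=
    (hf.differentiable (by norm_num)).differentiableAt
  have hgd : DifferentiableAt ℝ g p₀ :=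
    (hg.differentiable (by norm_num)).differentiableAt
  set Lf := fderiv ℝ f p₀ with hLfdef
  set Lg := fderiv ℝ g p₀ with hLgdef
  -- differentiability of the solution near t₀
  obtain ⟨δ, hδ, hballs⟩ := Metric.mem_nhds_iff.mp hs
  have hxev : ∀ᶠ t in nhds t₀, HasDerivAt x (deriv x t) t := by
    filter_upwards [Metric.ball_mem_nhds t₀ hδ] with t ht
    have hst : s ∈ nhds t := mem_of_superset (Metric.isOpen_ball.mem_nhds ht) hballs
    exact ((hx.contDiffAt hst).differentiableAt (by norm_num)).hasDerivAt
  have hyev : ∀ᶠ t in nhds t₀, HasDerivAt y (deriv y t) t := by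
    filter_upwards [Metric.ball_mem_nhds t₀ hδ] with t ht
    have hst : s ∈ nhds t := mem_of_superset (Metric.isOpen_ball.mem_nhds ht) hballs
    exact ((hy.contDiffAt hst).differentiableAt (by norm_num)).hasDerivAt
  have hdx : deriv x t₀ = f₀ := (hode t₀ ht₀s).1
  have hdy : deriv y t₀ = g₀ := (hode t₀ ht₀s).2
  have hγ : HasDerivAt (fun t : ℝ => ((x t, y t, t) : ℝ × ℝ × ℝ)) (f₀, g₀, 1) t₀ := by
    refine HasDerivAt.prodMk ?_ (HasDerivAt.prodMk ?_ (hasDerivAt_id t₀))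
    · exact hdx ▸ hxev.self_of_nhds
    · exact hdy ▸ hyev.self_of_nhds
  have hx'' : HasDerivAt (deriv x) (Lf (f₀, g₀, 1)) t₀ := by
    have hc : HasDerivAt (fun t : ℝ => f (x t, y t, t)) (Lf (f₀, g₀, 1)) t₀ :=
      hfd.hasFDerivAt.comp_hasDerivAt t₀ hγ
    refine hc.congr_of_eventuallyEq ?_
    filter_upwards [hs] with t ht
    exact (hode t ht).1
  have hy'' : HasDerivAt (deriv y) (Lg (f₀, g₀, 1)) t₀ := by
    have hc : HasDerivAt (fun t : ℝ => g (x t, y t, t)) (Lg (f₀, g₀, 1)) t₀ :=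
      hgd.hasFDerivAt.comp_hasDerivAt t₀ hγ
    refine hc.congr_of_eventuallyEq ?_
    filter_upwards [hs] with t ht
    exact (hode t ht).2
  have Tx := taylor2 x (deriv x) (Lf (f₀, g₀, 1)) t₀ hxev hx''
  have Ty := taylor2 y (deriv y) (Lg (f₀, g₀, 1)) t₀ hyev hy''
  rw [hdx] at Tx
  rw [hdy] at Ty
  -- continuity ingredients
  have hX₁t : Tendsto X₁ (nhds 0) (nhds (x t₀)) := by
    have := hX₁c.tendsto; rwa [hX₁0] at this
  have hY₂t : Tendsto Y₂ (nhds 0) (nhds (y t₀)) := by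
    have := hY₂c.tendsto; rwa [hY₂0] at this
  have htime : ∀ c : ℝ, Tendsto (fun h : ℝ => t₀ + c * h) (nhds 0) (nhds t₀) := by
    intro c
    have hct : ContinuousAt (fun h : ℝ => t₀ + c * h) 0 := by fun_prop
    simpa using hct.tendsto
  have hAt : Tendsto (fun h : ℝ => ((X₁ h, y t₀, t₀ + α * h) : ℝ × ℝ × ℝ))
      (nhds 0) (nhds p₀) := by
    rw [hp₀]
    exact hX₁t.prodMk_nhds (tendsto_const_nhds.prodMk_nhds (htime α))
  have hBt : Tendsto (fun h : ℝ => ((X₁ h, Y₂ h, t₀ + (1 - α) * h) : ℝ × ℝ × ℝ))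
      (nhds 0) (nhds p₀) := by
    rw [hp₀]
    exact hX₁t.prodMk_nhds (hY₂t.prodMk_nhds (htime (1 - α)))
  have hhalf : (fun h : ℝ => h / 2) =O[nhds 0] fun h : ℝ => h := by
    apply IsBigO.of_bound 1
    filter_upwards with h
    rw [Real.norm_eq_abs, Real.norm_eq_abs, abs_div, abs_two]
    have := abs_nonneg h; linarith
  have hsq : (fun h : ℝ => h * h) =ᶠ[nhds (0:ℝ)] fun h : ℝ => h ^ 2 := by
    filter_upwards with h; ring
  have hone : (fun h : ℝ => h * (1:ℝ)) =ᶠ[nhds (0:ℝ)] fun h : ℝ => h := by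
    filter_upwards with h; ring
  -- first order expansions
  have εfA : (fun h : ℝ => f (X₁ h, y t₀, t₀ + α * h) - f₀) =o[nhds 0]
      (fun _ : ℝ => (1:ℝ)) := by
    rw [isLittleO_one_iff]
    exact tendsto_sub_nhds_zero_iff.mpr (hf.continuous.continuousAt.tendsto.comp hAt)
  have εgA : (fun h : ℝ => g (X₁ h, y t₀, t₀ + α * h) - g₀) =o[nhds 0]
      (fun _ : ℝ => (1:ℝ)) := by
    rw [isLittleO_one_iff]
    exact tendsto_sub_nhds_zero_iff.mpr (hg.continuous.continuousAt.tendsto.comp hAt)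
  have εgB : (fun h : ℝ => g (X₁ h, Y₂ h, t₀ + (1 - α) * h) - g₀) =o[nhds 0]
      (fun _ : ℝ => (1:ℝ)) := by
    rw [isLittleO_one_iff]
    exact tendsto_sub_nhds_zero_iff.mpr (hg.continuous.continuousAt.tendsto.comp hBt)
  have E1 : (fun h : ℝ => X₁ h - x t₀ - h * (f₀ / 2)) =o[nhds 0] fun h : ℝ => h := by
    refine (hhalf.mul_isLittleO εfA).congr' ?_ hone
    filter_upwards [hX₁eq] with h hh
    linear_combination -hh
  have E2 : (fun h : ℝ => Y₁ h - y t₀ - h * (g₀ / 2)) =o[nhds 0] fun h : ℝ => h := by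
    refine (hhalf.mul_isLittleO εgA).congr' ?_ hone
    filter_upwards [hY₁eq] with h hh
    linear_combination -hh
  have E3 : (fun h : ℝ => Y₂ h - y t₀ - h * g₀) =o[nhds 0] fun h : ℝ => h := by
    have hb : (fun h : ℝ => h / 2 * (g (X₁ h, Y₂ h, t₀ + (1 - α) * h) - g₀))
        =o[nhds 0] fun h : ℝ => h :=
      (hhalf.mul_isLittleO εgB).congr' EventuallyEq.rfl hone
    refine (E2.add hb).congr' ?_ EventuallyEq.rfl
    filter_upwards [hY₁eq, hY₂eq] with h h1 h2
    linear_combination -h2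
  have hz : (fun _ : ℝ => (0:ℝ)) =o[nhds (0:ℝ)] fun h : ℝ => h := isLittleO_zero _ _
  -- the two argument curves are p₀ + h • v + o(h)
  have hA : (fun h : ℝ => ((X₁ h, y t₀, t₀ + α * h) : ℝ × ℝ × ℝ) - p₀
      - h • ((f₀ / 2, 0, α) : ℝ × ℝ × ℝ)) =o[nhds 0] fun h : ℝ => h := by
    have heq : (fun h : ℝ => ((X₁ h, y t₀, t₀ + α * h) : ℝ × ℝ × ℝ) - p₀
        - h • ((f₀ / 2, 0, α) : ℝ × ℝ × ℝ))
        = fun h : ℝ => ((X₁ h - x t₀ - h * (f₀ / 2), 0, 0) : ℝ × ℝ × ℝ) := by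
      funext h
      rw [hp₀]
      simp only [Prod.mk_sub_mk, Prod.smul_mk, smul_eq_mul, Prod.mk.injEq]
      exact ⟨trivial, by ring, by ring⟩
    rw [heq]
    exact E1.prod_left (hz.prod_left hz)
  have hB : (fun h : ℝ => ((X₁ h, Y₂ h, t₀ + (1 - α) * h) : ℝ × ℝ × ℝ) - p₀
      - h • ((f₀ / 2, g₀, 1 - α) : ℝ × ℝ × ℝ)) =o[nhds 0] fun h : ℝ => h := by
    have heq : (fun h : ℝ => ((X₁ h, Y₂ h, t₀ + (1 - α) * h) : ℝ × ℝ × ℝ) - p₀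
        - h • ((f₀ / 2, g₀, 1 - α) : ℝ × ℝ × ℝ))
        = fun h : ℝ => ((X₁ h - x t₀ - h * (f₀ / 2), Y₂ h - y t₀ - h * g₀, 0) : ℝ × ℝ × ℝ) := by
      funext h
      rw [hp₀]
      simp only [Prod.mk_sub_mk, Prod.smul_mk, smul_eq_mul, Prod.mk.injEq]
      exact ⟨trivial, trivial, by ring⟩
    rw [heq]
    exact E1.prod_left (E3.prod_left hz)
  have FA := comp_key f hfd _ _ hA
  have GA := comp_key g hgd _ _ hA
  have FB := comp_key f hfd _ _ hB
  have GB := comp_key g hgd _ _ hB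
  -- second order expansions
  have E1' : (fun h : ℝ => X₁ h - x t₀ - h * (f₀ / 2)
      - h ^ 2 / 2 * Lf (f₀ / 2, 0, α)) =o[nhds 0] fun h : ℝ => h ^ 2 := by
    refine (hhalf.mul_isLittleO FA).congr' ?_ hsq
    filter_upwards [hX₁eq] with h hh
    linear_combination -hh
  have E2' : (fun h : ℝ => Y₁ h - y t₀ - h * (g₀ / 2)
      - h ^ 2 / 2 * Lg (f₀ / 2, 0, α)) =o[nhds 0] fun h : ℝ => h ^ 2 := by
    refine (hhalf.mul_isLittleO GA).congr' ?_ hsq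
    filter_upwards [hY₁eq] with h hh
    linear_combination -hh
  have E3' : (fun h : ℝ => Y₂ h - y t₀ - h * g₀
      - h ^ 2 / 2 * (Lg (f₀ / 2, 0, α) + Lg (f₀ / 2, g₀, 1 - α)))
      =o[nhds 0] fun h : ℝ => h ^ 2 := by
    have hb : (fun h : ℝ => h / 2 * (g (X₁ h, Y₂ h, t₀ + (1 - α) * h) - g₀
        - h * Lg (f₀ / 2, g₀, 1 - α))) =o[nhds 0] fun h : ℝ => h ^ 2 :=
      (hhalf.mul_isLittleO GB).congr' EventuallyEq.rfl hsq
    refine (E2'.add hb).congr' ?_ EventuallyEq.rfl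
    filter_upwards [hY₂eq] with h h2
    linear_combination -h2
  have E4' : (fun h : ℝ => X₂ h - x t₀ - h * f₀
      - h ^ 2 / 2 * (Lf (f₀ / 2, 0, α) + Lf (f₀ / 2, g₀, 1 - α)))
      =o[nhds 0] fun h : ℝ => h ^ 2 := by
    have hb : (fun h : ℝ => h / 2 * (f (X₁ h, Y₂ h, t₀ + (1 - α) * h) - f₀
        - h * Lf (f₀ / 2, g₀, 1 - α))) =o[nhds 0] fun h : ℝ => h ^ 2 :=
      (hhalf.mul_isLittleO FB).congr' EventuallyEq.rfl hsq
    refine (E1'.add hb).congr' ?_ EventuallyEq.rfl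
    filter_upwards with h
    linear_combination -(hX₂eq h)
  -- sum of the two linear-map values equals the full derivative value
  have hvf : Lf (f₀ / 2, 0, α) + Lf (f₀ / 2, g₀, 1 - α) = Lf (f₀, g₀, 1) := by
    rw [← map_add]
    congr 1
    simp only [Prod.mk_add_mk, Prod.mk.injEq]
    exact ⟨by ring, by ring, by ring⟩
  have hvg : Lg (f₀ / 2, 0, α) + Lg (f₀ / 2, g₀, 1 - α) = Lg (f₀, g₀, 1) := by
    rw [← map_add]
    congr 1
    simp only [Prod.mk_add_mk, Prod.mk.injEq]
    exact ⟨by ring, by ring, by ring⟩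
  rw [hvf] at E4'
  rw [hvg] at E3'
  constructor
  · refine (E4'.sub Tx).congr' ?_ EventuallyEq.rfl
    filter_upwards with h
    ring
  · refine (E3'.sub Ty).congr' ?_ EventuallyEq.rfl
    filter_upwards with h
    ring
end
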